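/- For real numbers w_1 > w_2 > ⋯ > w_m > 0, the maximum over all v ∈ B_m of ⟨v, w⟩ is attained at one of the vectors v_k = (1/√k) Σ_{i=1}^k e_i, 1 ≤ k ≤ m. -/

import Mathlib

open scoped RealInnerProductSpace BigOperators
noncomputable section

def A (m : ℕ) : Set (EuclideanSpace ℝ (Fin m)) :=
  {v | (∀ i, v i = -1 ∨ v i = 0 ∨ v i = 1) ∧ v ≠ 0}

def B (m : ℕ) : Set (EuclideanSpace ℝ (Fin m)) :=
  (fun v => ‖v‖⁻¹ • v) '' A m

def vk (m : ℕ) (k : Fin m) : EuclideanSpace ℝ (Fin m) :=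
  WithLp.toLp 2 (fun i => if i ≤ k then (Real.sqrt ((k : ℕ) + 1))⁻¹ else 0)

lemma sum_S_le (m : ℕ) (w : EuclideanSpace ℝ (Fin m))
    (hdec : ∀ i j : Fin m, i < j → w j < w i) (S : Finset (Fin m)) :
    ∑ i ∈ S, w i ≤ ∑ i ∈ Finset.univ.filter (fun i : Fin m => (i : ℕ) < S.card), w i := by
  have hanti : ∀ i j : Fin m, i ≤ j → w j ≤ w i := by
    intro i j h
    rcases eq_or_lt_of_le h with rfl | h
    · exact le_refl _
    · exact (hdec i j h).le
  set s := S.card with hs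
  have hsm : s ≤ m := by simpa using S.card_le_univ
  set f := S.orderEmbOfFin (rfl : S.card = s) with hf
  have h1 : ∑ i ∈ S, w i = ∑ i : Fin s, w (f i) := by
    refine (Finset.sum_bij (fun i _ => f i) ?_ ?_ ?_ ?_).symm
    · intro i _; exact S.orderEmbOfFin_mem rfl i
    · intro a _ b _ h; exact f.injective h
    · intro b hb
      obtain ⟨i, hi⟩ := (Set.ext_iff.mp (S.range_orderEmbOfFin rfl) b).mpr hb
      exact ⟨i, Finset.mem_univ _, hi⟩
    · intro a _; rfl
  have h2 : ∑ i ∈ Finset.univ.filter (fun i : Fin m => (i : ℕ) < s), w i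
      = ∑ i : Fin s, w (Fin.castLE hsm i) := by
    refine (Finset.sum_bij (fun i _ => Fin.castLE hsm i) ?_ ?_ ?_ ?_).symm
    · intro i _; simp [Fin.castLE, i.isLt]
    · intro a _ b _ h; exact Fin.castLE_injective hsm h
    · intro b hb
      simp only [Finset.mem_filter] at hb
      exact ⟨⟨b, hb.2⟩, Finset.mem_univ _, rfl⟩
    · intro a _; rfl
  rw [h1, h2]
  apply Finset.sum_le_sum
  intro i _
  apply hanti
  have key : ∀ n, ∀ hn : n < s, n ≤ ((f ⟨n, hn⟩ : Fin m) : ℕ) := by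
    intro n
    induction n with
    | zero => intro _; exact Nat.zero_le _
    | succ n ih =>
        intro hn
        have hn' : n < s := Nat.lt_of_succ_lt hn
        have hlt : f ⟨n, hn'⟩ < f ⟨n + 1, hn⟩ :=
          f.strictMono (show (⟨n, hn'⟩ : Fin s) < ⟨n + 1, hn⟩ from Nat.lt_succ_self n)
        exact Nat.succ_le_of_lt (lt_of_le_of_lt (ih hn') hlt)
  rw [Fin.le_def]
  simpa using key i i.isLt

theorem stmt17 (m : ℕ) (hm : 2 ≤ m) (w : EuclideanSpace ℝ (Fin m))
    (hdec : ∀ i j : Fin m, i < j → w j < w i) (hpos : ∀ i, 0 < w i) :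
    ∃ k : Fin m, ∀ v ∈ B m, ⟪v, w⟫ ≤ ⟪vk m k, w⟫ := by
  obtain ⟨k, -, hk⟩ := Finset.exists_max_image Finset.univ
    (fun k : Fin m => ⟪vk m k, w⟫) ⟨⟨0, by omega⟩, Finset.mem_univ _⟩
  refine ⟨k, ?_⟩
  rintro v ⟨u, ⟨hu1, hu0⟩, rfl⟩
  classical
  set S : Finset (Fin m) := Finset.univ.filter (fun i => u i ≠ 0) with hS
  set s := S.card with hscard
  have hsne : S.Nonempty := by
    rcases Function.ne_iff.mp (show u.ofLp ≠ 0 from fun h => hu0 (by ext i; simp [h])) with ⟨i, hi⟩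
    exact ⟨i, by simp only [hS, Finset.mem_filter, Finset.mem_univ, true_and]; simpa using hi⟩
  have hs1 : 1 ≤ s := hsne.card_pos
  have hsm : s ≤ m := le_trans S.card_le_univ (by simp)
  have hnorm : ‖u‖ = Real.sqrt s := by
    rw [EuclideanSpace.norm_eq]
    congr 1
    rw [← Finset.sum_filter_of_ne (p := fun i => u i ≠ 0)
      (fun x _ hx h0 => hx (by simp [h0]))]
    rw [Finset.sum_congr rfl (fun i hi => ?_), Finset.sum_const, nsmul_eq_mul, mul_one]
    have hi' : u i ≠ 0 := (Finset.mem_filter.mp hi).2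
    rcases hu1 i with h | h | h
    · simp [h]
    · exact absurd h hi'
    · simp [h]
  have hinner : ⟪u, w⟫ = ∑ i, u i * w i := by
    simp [PiLp.inner_apply, RCLike.inner_apply]
    exact Finset.sum_congr rfl fun i _ => mul_comm _ _
  have hiuw : ⟪u, w⟫ ≤ ∑ i ∈ S, w i := by
    rw [hinner, hS, Finset.sum_filter]
    apply Finset.sum_le_sum
    intro i _
    rcases hu1 i with h | h | h
    · simp only [h, if_pos (show (-1 : ℝ) ≠ 0 by norm_num)]
      nlinarith [hpos i]
    · simp [h]
    · simp [h]
  set T : ℝ := ∑ i ∈ Finset.univ.filter (fun i : Fin m => (i : ℕ) < s), w i with hT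
  have hle : ⟪u, w⟫ ≤ T := hiuw.trans (sum_S_le m w hdec S)
  set kk : Fin m := ⟨s - 1, by omega⟩ with hkk
  have hvkeq : ⟪vk m kk, w⟫ = (Real.sqrt s)⁻¹ * T := by
    have hsq : ((kk : ℕ) : ℝ) + 1 = (s : ℝ) := by
      have h := Nat.sub_add_cancel hs1
      exact_mod_cast congrArg (Nat.cast (R := ℝ)) h
    have hiff : ∀ i : Fin m, i ≤ kk ↔ (i : ℕ) < s := by
      intro i
      rw [Fin.le_def]
      show (i : ℕ) ≤ s - 1 ↔ (i : ℕ) < s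
      omega
    simp only [PiLp.inner_apply, RCLike.inner_apply, conj_trivial, vk, hsq, hT,
      Finset.mul_sum, Finset.sum_filter]
    refine Finset.sum_congr rfl fun i _ => ?_
    by_cases h : (i : ℕ) < s
    · rw [if_pos ((hiff i).mpr h), if_pos h, mul_comm]
    · rw [if_neg (fun hc => h ((hiff i).mp hc)), if_neg h, mul_zero, mul_zero]
  have hfinal : ⟪(‖u‖⁻¹ • u : EuclideanSpace ℝ (Fin m)), w⟫ ≤ ⟪vk m kk, w⟫ := by
    rw [real_inner_smul_left, hnorm, hvkeq]
    exact mul_le_mul_of_nonneg_left hle (inv_nonneg.mpr (Real.sqrt_nonneg _))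
  show ⟪(‖u‖⁻¹ • u : EuclideanSpace ℝ (Fin m)), w⟫ ≤ ⟪vk m k, w⟫
  exact hfinal.trans (hk kk (Finset.mem_univ _))
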